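/- Let d ≥ 1 be an integer and let A, B be real polynomials with B ≠ 0. Suppose there exists a real trigonometric polynomial p such that p(θ) = A(tan(dθ/2))/B(tan(dθ/2)) for every θ ∈ ℝ with cos(dθ/2) ≠ 0 and B(tan(dθ/2)) ≠ 0. Then there exist an integer k ≥ 1 and a real polynomial Ã with deg à ≤ 2k such that A/B = Ã/(x² + 1)^k as rational functions in ℝ(x); in particular, every complex root of the denominator of A/B (in lowest terms) lies in {i, −i}. -/

import Mathlib

open Polynomial

noncomputable def trigP : ℕ → ℝ[X] × ℝ[X]
  | 0 => (1, 0)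
  | n + 1 => ((trigP n).1 - X * (trigP n).2, (trigP n).2 + X * (trigP n).1)

noncomputable def Pc (n : ℕ) : ℝ[X] := (trigP n).1
noncomputable def Ps (n : ℕ) : ℝ[X] := (trigP n).2

lemma Pc_succ (n : ℕ) : Pc (n+1) = Pc n - X * Ps n := rfl
lemma Ps_succ (n : ℕ) : Ps (n+1) = Ps n + X * Pc n := rfl
lemma Pc_zero : Pc 0 = 1 := rfl
lemma Ps_zero : Ps 0 = 0 := rfl

lemma sq_add_sq (n : ℕ) : Pc n ^ 2 + Ps n ^ 2 = (1 + X ^ 2) ^ n := by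
  induction n with
  | zero => simp [Pc_zero, Ps_zero]
  | succ n ih =>
    rw [Pc_succ, Ps_succ]
    calc (Pc n - X * Ps n) ^ 2 + (Ps n + X * Pc n) ^ 2 = (1 + X^2) * (Pc n ^2 + Ps n ^2) := by ring
    _ = (1 + X ^ 2) ^ (n+1) := by rw [ih]; ring

lemma trig_eval (n : ℕ) (t : ℝ) (h : Real.cos t ≠ 0) :
    (Pc n).eval (Real.tan t) * Real.cos t ^ n = Real.cos (n * t) ∧
    (Ps n).eval (Real.tan t) * Real.cos t ^ n = Real.sin (n * t) := by
  induction n with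
  | zero => simp [Pc_zero, Ps_zero]
  | succ n ih =>
    obtain ⟨hc, hs⟩ := ih
    have ht : Real.tan t = Real.sin t / Real.cos t := Real.tan_eq_sin_div_cos t
    constructor
    · rw [Pc_succ]
      have : ((n : ℝ) + 1) * t = n * t + t := by ring
      push_cast
      rw [this, Real.cos_add, ← hc, ← hs]
      simp only [eval_sub, eval_mul, eval_X, ht]
      field_simp
      ring
    · rw [Ps_succ]
      have : ((n : ℝ) + 1) * t = n * t + t := by ring
      push_cast
      rw [this, Real.sin_add, ← hc, ← hs]
      simp only [eval_add, eval_mul, eval_X, ht]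
      field_simp
      ring

open Complex in
lemma aeval_trig (n : ℕ) (z : ℂ) :
    (aeval z (Pc n) + I * aeval z (Ps n) = (1 + I * z) ^ n) ∧
    (aeval z (Pc n) - I * aeval z (Ps n) = (1 - I * z) ^ n) := by
  induction n with
  | zero => simp [Pc_zero, Ps_zero]
  | succ n ih =>
    obtain ⟨h1, h2⟩ := ih
    rw [Pc_succ, Ps_succ]
    simp only [map_sub, map_add, map_mul, aeval_X]
    constructor
    · rw [pow_succ]
      linear_combination (1 + I*z) * h1 - z * (aeval z (Ps n)) * Complex.I_sq
    · rw [pow_succ]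
      linear_combination (1 - I*z) * h2 - z * (aeval z (Ps n)) * Complex.I_sq

open Complex in
lemma aeval_Pc_I (d : ℕ) (hd : 1 ≤ d) :
    aeval I (Pc d) = 2 ^ (d-1) ∧ aeval I (Ps d) = I * 2 ^ (d-1) ∧
    aeval (-I) (Pc d) = 2 ^ (d-1) ∧ aeval (-I) (Ps d) = -(I * 2 ^ (d-1)) := by
  obtain ⟨h1, h2⟩ := aeval_trig d I
  obtain ⟨h3, h4⟩ := aeval_trig d (-I)
  have e1 : (1 + I * I : ℂ) = 0 := by simp [I_mul_I]
  have e2 : (1 - I * I : ℂ) = 2 := by simp [I_mul_I]; norm_num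
  have e3 : (1 + I * (-I) : ℂ) = 2 := by simp [I_mul_I]; norm_num
  have e4 : (1 - I * (-I) : ℂ) = 0 := by simp [I_mul_I]
  rw [e1] at h1; rw [e2] at h2; rw [e3] at h3; rw [e4] at h4
  have hz : (0:ℂ) ^ d = 0 := by
    apply zero_pow; omega
  rw [hz] at h1 h4
  have h2d : (2:ℂ) ^ d = 2 * 2 ^ (d-1) := by
    conv_lhs => rw [show d = 1 + (d-1) by omega]
    rw [pow_add, pow_one]
  rw [h2d] at h2 h3
  refine ⟨?_, ?_, ?_, ?_⟩
  · linear_combination (h1 + h2) / 2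
  · linear_combination (-I/2) * h1 + (I/2) * h2 + (aeval I (Ps d)) * Complex.I_sq
  · linear_combination (h3 + h4) / 2
  · linear_combination (-I/2) * h3 + (I/2) * h4 + (aeval (-I) (Ps d)) * Complex.I_sq

noncomputable def star' (d M : ℕ) (P : ℝ[X]) : ℝ[X] :=
  ∑ j ∈ Finset.range (M+1), C (P.coeff j) * Ps d ^ j * Pc d ^ (M - j)

lemma eval_star' (d M : ℕ) (P : ℝ[X]) (v : ℝ) (hv : (Pc d).eval v ≠ 0)
    (hM : P.natDegree ≤ M) :
    (star' d M P).eval v =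
      (Pc d).eval v ^ M * P.eval ((Ps d).eval v / (Pc d).eval v) := by
  rw [star', eval_finset_sum, eval_eq_sum_range' (Nat.lt_succ_of_le hM), Finset.mul_sum]
  apply Finset.sum_congr rfl
  intro j hj
  simp only [Finset.mem_range] at hj
  have hjM : j ≤ M := by omega
  simp only [eval_mul, eval_pow, eval_C]
  have hpow : eval v (Pc d) ^ M = eval v (Pc d) ^ j * eval v (Pc d) ^ (M - j) := by
    rw [← pow_add]; congr 1; omega
  rw [div_pow, hpow]
  field_simp

lemma aeval_star' (d M : ℕ) (P : ℝ[X]) (v z : ℂ)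
    (hvz : aeval v (Ps d) = z * aeval v (Pc d)) (hM : P.natDegree ≤ M) :
    aeval v (star' d M P) = aeval v (Pc d) ^ M * aeval z P := by
  rw [star', map_sum, aeval_eq_sum_range' (Nat.lt_succ_of_le hM), Finset.mul_sum]
  apply Finset.sum_congr rfl
  intro j hj
  simp only [Finset.mem_range] at hj
  have hjM : j ≤ M := by omega
  simp only [map_mul, map_pow, aeval_C, hvz]
  have hpow : aeval v (Pc d) ^ M = aeval v (Pc d) ^ j * aeval v (Pc d) ^ (M - j) := by
    rw [← pow_add]; congr 1; omega
  rw [mul_pow, hpow, Algebra.smul_def]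
  ring

lemma eval_star'_root (d M : ℕ) (P : ℝ[X]) (v : ℝ) (hv : (Pc d).eval v = 0) :
    (star' d M P).eval v = P.coeff M * (Ps d).eval v ^ M := by
  rw [star', eval_finset_sum]
  rw [Finset.sum_eq_single M]
  · simp [Nat.sub_self]
  · intro j hj hjM
    simp only [Finset.mem_range] at hj
    have : M - j ≠ 0 := by omega
    simp [eval_mul, eval_pow, hv, zero_pow this]
  · intro h
    simp at h

lemma star'_one (M : ℕ) (P : ℝ[X]) (hM : P.natDegree ≤ M) : star' 1 M P = P := by
  have hc : Pc 1 = 1 := by simp [Pc_succ, Pc_zero, Ps_zero]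
  have hs : Ps 1 = X := by simp [Ps_succ, Pc_zero, Ps_zero]
  rw [star', hc, hs]
  simp only [one_pow, mul_one]
  conv_rhs => rw [P.as_sum_range' (M+1) (Nat.lt_succ_of_le hM)]
  exact Finset.sum_congr rfl fun j _ => by rw [C_mul_X_pow_eq_monomial]

lemma natDegree_one_add_X_sq : (1 + X ^ 2 : ℝ[X]).natDegree = 2 := by
  compute_degree!

lemma trig_rep (p : ℝ → ℝ) (hp : p ∈ Algebra.adjoin ℝ ({Real.cos, Real.sin} : Set (ℝ → ℝ))) :
    ∃ (n : ℕ) (G : ℝ[X]), G.natDegree ≤ 2 * n ∧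
      ∀ θ : ℝ, Real.cos (θ/2) ≠ 0 →
        p θ * (1 + Real.tan (θ/2) ^ 2) ^ n = G.eval (Real.tan (θ/2)) := by
  induction hp using Algebra.adjoin_induction with
  | mem f hf =>
    have key : ∀ θ : ℝ, Real.cos (θ/2) ≠ 0 →
        (Real.cos θ * (1 + Real.tan (θ/2) ^ 2) = 1 - Real.tan (θ/2) ^ 2 ∧
         Real.sin θ * (1 + Real.tan (θ/2) ^ 2) = 2 * Real.tan (θ/2)) := by
      intro θ hθ
      have hθ2 : θ = 2 * (θ/2) := by ring
      have hcos : Real.cos θ = 2 * Real.cos (θ/2) ^ 2 - 1 := by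
        conv_lhs => rw [hθ2]
        exact Real.cos_two_mul _
      have hsin : Real.sin θ = 2 * Real.sin (θ/2) * Real.cos (θ/2) := by
        conv_lhs => rw [hθ2]
        exact Real.sin_two_mul _
      have hpyth : Real.sin (θ/2) ^ 2 + Real.cos (θ/2) ^ 2 = 1 :=
        Real.sin_sq_add_cos_sq _
      have htan : Real.tan (θ/2) = Real.sin (θ/2) / Real.cos (θ/2) :=
        Real.tan_eq_sin_div_cos _
      rw [hcos, hsin, htan]
      constructor
      · field_simp
        nlinarith [hpyth]
      · field_simp
        have h5 : (Real.sin (θ/2) ^ 2 + Real.cos (θ/2) ^ 2) * Real.sin (θ/2) = 1 * Real.sin (θ/2) := by rw [hpyth]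
        nlinarith [hpyth, h5]
    rcases hf with hf | hf
    · refine ⟨1, 1 - X ^ 2, ?_, ?_⟩
      · have : (1 - X ^ 2 : ℝ[X]).natDegree ≤ 2 := by compute_degree
        omega
      · intro θ hθ
        rw [hf, pow_one]
        simp only [eval_sub, eval_one, eval_pow, eval_X]
        exact (key θ hθ).1
    · rw [Set.mem_singleton_iff] at hf
      refine ⟨1, C 2 * X, ?_, ?_⟩
      · have : (C 2 * X : ℝ[X]).natDegree ≤ 2 := by
          apply le_trans (natDegree_mul_le)
          simp
        omega
      · intro θ hθ
        rw [hf, pow_one]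
        simp only [eval_mul, eval_C, eval_X]
        exact (key θ hθ).2
  | algebraMap r =>
    refine ⟨0, C r, by simp, fun θ _ => by simp [Algebra.algebraMap_eq_smul_one]⟩
  | add f g hf hg ihf ihg =>
    obtain ⟨n1, G1, hd1, he1⟩ := ihf
    obtain ⟨n2, G2, hd2, he2⟩ := ihg
    refine ⟨n1 + n2, G1 * (1 + X ^ 2) ^ n2 + G2 * (1 + X ^ 2) ^ n1, ?_, ?_⟩
    · apply le_trans (natDegree_add_le _ _)
      have h1 : (G1 * (1 + X ^ 2) ^ n2).natDegree ≤ 2 * (n1 + n2) := by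
        apply le_trans (natDegree_mul_le)
        rw [natDegree_pow, natDegree_one_add_X_sq]
        omega
      have h2 : (G2 * (1 + X ^ 2) ^ n1).natDegree ≤ 2 * (n1 + n2) := by
        apply le_trans (natDegree_mul_le)
        rw [natDegree_pow, natDegree_one_add_X_sq]
        omega
      omega
    · intro θ hθ
      have e1 := he1 θ hθ
      have e2 := he2 θ hθ
      simp only [Pi.add_apply, eval_add, eval_mul, eval_pow, eval_add, eval_one, eval_X]
      rw [← e1, ← e2, pow_add]
      ring
  | mul f g hf hg ihf ihg =>
    obtain ⟨n1, G1, hd1, he1⟩ := ihf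
    obtain ⟨n2, G2, hd2, he2⟩ := ihg
    refine ⟨n1 + n2, G1 * G2, ?_, ?_⟩
    · apply le_trans (natDegree_mul_le)
      omega
    · intro θ hθ
      have e1 := he1 θ hθ
      have e2 := he2 θ hθ
      simp only [Pi.mul_apply, eval_mul]
      rw [← e1, ← e2, pow_add]
      ring

lemma natDegree_X_sq_add_one : (X ^ 2 + 1 : ℝ[X]).natDegree = 2 := by
  compute_degree!

lemma monic_X_sq_add_one : (X ^ 2 + 1 : ℝ[X]).Monic := by
  have : (X ^ 2 + 1 : ℝ[X]) = X ^ 2 + C 1 := by simp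
  rw [this]
  exact monic_X_pow_add_C 1 (by norm_num)

lemma decomp_aux : ∀ (N : ℕ) (B : ℝ[X]), B.natDegree ≤ N → B ≠ 0 →
    (∀ z : ℂ, aeval z B = 0 → z = Complex.I ∨ z = -Complex.I) →
    ∃ (c : ℝ) (m : ℕ), c ≠ 0 ∧ B = C c * (X ^ 2 + 1) ^ m := by
  intro N
  induction N with
  | zero =>
    intro B hdeg hB _
    obtain ⟨c, hc⟩ := Polynomial.natDegree_eq_zero.mp (Nat.le_zero.mp hdeg)
    exact ⟨c, 0, fun h => hB (by rw [← hc, h, map_zero]), by rw [← hc]; simp⟩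
  | succ N ih =>
    intro B hdeg hB hroots
    rcases Nat.eq_zero_or_pos B.natDegree with h0 | hpos
    · obtain ⟨c, hc⟩ := Polynomial.natDegree_eq_zero.mp h0
      exact ⟨c, 0, fun h => hB (by rw [← hc, h, map_zero]), by rw [← hc]; simp⟩
    · -- B has a complex root
      have hmap : (B.map (algebraMap ℝ ℂ)).degree = B.degree :=
        degree_map_eq_of_injective (algebraMap ℝ ℂ).injective B
      have hdpos : 0 < (B.map (algebraMap ℝ ℂ)).degree := by
        rw [hmap]; exact natDegree_pos_iff_degree_pos.mp hpos
      obtain ⟨z, hz⟩ := Complex.exists_root hdpos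
      have hzB : aeval z B = 0 := by
        rwa [aeval_def, ← eval_map]
      -- the remainder mod X^2+1 vanishes
      set q : ℝ[X] := X ^ 2 + 1 with hq
      set R := B %ₘ q with hRdef
      have hmod : R + q * (B /ₘ q) = B := modByMonic_add_div B q
      have hzq : aeval z q = 0 := by
        have hz2 : z ^ 2 + 1 = 0 := by
          rcases hroots z hzB with rfl | rfl <;> simp [Complex.I_sq]
        simp [hq, hz2]
      have hzR : aeval z R = 0 := by
        have := congrArg (aeval z) hmod
        simp only [map_add, map_mul, hzq, zero_mul, add_zero] at this
        rw [this, hzB]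
      have hRdeg : R.degree < 2 := by
        have := degree_modByMonic_lt B monic_X_sq_add_one
        have hqd : q.degree = 2 := by
          rw [hq, degree_eq_natDegree monic_X_sq_add_one.ne_zero, natDegree_X_sq_add_one]
          rfl
        rwa [hqd] at this
      have hRform : R = C (R.coeff 1) * X + C (R.coeff 0) := by
        apply eq_X_add_C_of_degree_le_one
        exact Order.lt_succ_iff.mp hRdeg
      have hR0 : R = 0 := by
        rw [hRform] at hzR
        simp only [map_add, map_mul, aeval_C, aeval_X] at hzR
        have him : z.im = 1 ∨ z.im = -1 := by
          rcases hroots z hzB with rfl | rfl <;> simp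
        have hre : z.re = 0 := by
          rcases hroots z hzB with rfl | rfl <;> simp
        have h1 : R.coeff 1 = 0 := by
          have := congrArg Complex.im hzR
          simp [Complex.add_im, Complex.mul_im, hre] at this
          rcases him with h | h <;> rw [h] at this <;> simpa using this
        have h0 : R.coeff 0 = 0 := by
          rw [h1] at hzR
          simpa using hzR
        rw [hRform, h1, h0]
        simp
      have hBfact : B = q * (B /ₘ q) := by
        rw [hR0, zero_add] at hmod
        exact hmod.symm
      set Q := B /ₘ q with hQdef
      have hQ0 : Q ≠ 0 := by
        intro h
        rw [h, mul_zero] at hBfact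
        exact hB hBfact
      have hq0 : q ≠ 0 := monic_X_sq_add_one.ne_zero
      have hdegs : B.natDegree = 2 + Q.natDegree := by
        rw [hBfact, natDegree_mul hq0 hQ0, hq, natDegree_X_sq_add_one]
      have hQroots : ∀ z : ℂ, aeval z Q = 0 → z = Complex.I ∨ z = -Complex.I := by
        intro w hw
        apply hroots
        rw [hBfact, map_mul, hw, mul_zero]
      obtain ⟨c, m, hc, hQform⟩ := ih Q (by omega) hQ0 hQroots
      refine ⟨c, m + 1, hc, ?_⟩
      rw [hBfact, hQform, pow_succ]
      ring

def IsTrigPoly (p : ℝ → ℝ) : Prop :=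
  p ∈ Algebra.adjoin ℝ ({Real.cos, Real.sin} : Set (ℝ → ℝ))

theorem rational_in_tan_is_trigPoly_denominator
    (d : ℕ) (hd : 1 ≤ d)
    (A B : ℝ[X]) (hB : B ≠ 0)
    (hex : ∃ p : ℝ → ℝ, IsTrigPoly p ∧
      ∀ θ : ℝ, Real.cos (d * θ / 2) ≠ 0 → B.eval (Real.tan (d * θ / 2)) ≠ 0 →
        p θ = A.eval (Real.tan (d * θ / 2)) / B.eval (Real.tan (d * θ / 2))) :
    (∃ k : ℕ, 1 ≤ k ∧ ∃ At : ℝ[X], At.natDegree ≤ 2 * k ∧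
        algebraMap ℝ[X] (RatFunc ℝ) A / algebraMap ℝ[X] (RatFunc ℝ) B =
          algebraMap ℝ[X] (RatFunc ℝ) At /
            algebraMap ℝ[X] (RatFunc ℝ) ((X ^ 2 + 1) ^ k)) ∧
      ∀ z : ℂ,
        Polynomial.aeval z
            ((algebraMap ℝ[X] (RatFunc ℝ) A / algebraMap ℝ[X] (RatFunc ℝ) B).denom) = 0 →
          z = Complex.I ∨ z = -Complex.I := by
  obtain ⟨p, hp, hpeq⟩ := hex
  obtain ⟨n, G, hGdeg, hGeval⟩ := trig_rep p hp
  set f := algebraMap ℝ[X] (RatFunc ℝ) A / algebraMap ℝ[X] (RatFunc ℝ) B with hfdef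
  set A₀ := f.num with hA₀def
  set B₀ := f.denom with hB₀def
  have hB₀ : B₀ ≠ 0 := f.denom_ne_zero
  have hcop : IsCoprime A₀ B₀ := RatFunc.isCoprime_num_denom f
  have hB₀dvd : B₀ ∣ B := (RatFunc.denom_dvd hB).mpr ⟨A, hfdef⟩
  have hcross : A * B₀ = A₀ * B := by
    apply RatFunc.algebraMap_injective ℝ
    rw [map_mul, map_mul]
    rw [← div_eq_div_iff (RatFunc.algebraMap_ne_zero hB) (RatFunc.algebraMap_ne_zero hB₀)]
    rw [← hfdef, RatFunc.num_div_denom]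
  -- basic facts about Pc and Ps
  obtain ⟨hPcI, hPsI, hPcI', hPsI'⟩ := aeval_Pc_I d hd
  have h2pow : (2:ℂ) ^ (d-1) ≠ 0 := pow_ne_zero _ two_ne_zero
  have hPc_ne : Pc d ≠ 0 := by
    intro h
    rw [h, map_zero] at hPcI
    exact h2pow hPcI.symm
  set M := max A₀.natDegree B₀.natDegree with hMdef
  have hMA : A₀.natDegree ≤ M := le_max_left _ _
  have hMB : B₀.natDegree ≤ M := le_max_right _ _
  -- the pointwise identity
  have hpoint : ∀ v : ℝ, (Pc d).eval v ≠ 0 →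
      B.eval ((Ps d).eval v / (Pc d).eval v) ≠ 0 →
      G.eval v * (star' d M B₀).eval v =
        (1 + v ^ 2) ^ n * (star' d M A₀).eval v := by
    intro v hPcv hBw
    set t := Real.arctan v with htdef
    have hcost : 0 < Real.cos t := Real.cos_arctan_pos v
    have htant : Real.tan t = v := Real.tan_arctan v
    obtain ⟨hct, hst⟩ := trig_eval d t hcost.ne'
    rw [htant] at hct hst
    have hcosd : Real.cos (d * t) ≠ 0 := by
      rw [← hct]; exact mul_ne_zero hPcv (pow_ne_zero _ hcost.ne')
    have harg : (d:ℝ) * (2 * t) / 2 = d * t := by ring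
    have hhalf : (2 * t) / 2 = t := by ring
    have htan2 : Real.tan ((d:ℝ) * (2 * t) / 2) = (Ps d).eval v / (Pc d).eval v := by
      rw [harg, Real.tan_eq_sin_div_cos, ← hct, ← hst,
        mul_div_mul_right _ _ (pow_ne_zero d hcost.ne')]
    have hcosarg : Real.cos ((d:ℝ) * (2 * t) / 2) ≠ 0 := by rw [harg]; exact hcosd
    have hBarg : B.eval (Real.tan ((d:ℝ) * (2 * t) / 2)) ≠ 0 := by rw [htan2]; exact hBw
    have hpθ := hpeq (2 * t) hcosarg hBarg
    have hGv := hGeval (2 * t) (by rw [hhalf]; exact hcost.ne')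
    rw [hhalf, htant] at hGv
    rw [htan2] at hpθ
    set w := (Ps d).eval v / (Pc d).eval v with hwdef
    have hB₀w : B₀.eval w ≠ 0 := by
      obtain ⟨E, hE⟩ := hB₀dvd
      intro h
      apply hBw
      rw [hE, eval_mul, h, zero_mul]
    have hAB : A.eval w * B₀.eval w = A₀.eval w * B.eval w := by
      have := congrArg (eval w) hcross
      simpa [eval_mul] using this
    rw [eval_star' d M B₀ v hPcv hMB, eval_star' d M A₀ v hPcv hMA, ← hwdef]
    rw [hpθ] at hGv
    rw [← hGv]
    rw [div_mul_eq_mul_div, div_mul_eq_mul_div, div_eq_iff hBw]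
    linear_combination ((1 + v^2)^n * (Pc d).eval v ^ M) * hAB
  -- upgrade to a polynomial identity
  have hkey : G * star' d M B₀ = (1 + X ^ 2) ^ n * star' d M A₀ := by
    have hsub : G * star' d M B₀ - (1 + X ^ 2) ^ n * star' d M A₀ = 0 := by
      apply eq_zero_of_infinite_isRoot
      set Dbad : ℝ[X] := Pc d * (B.roots.map (fun r => Ps d - C r * Pc d)).prod with hDbad
      have hfac_ne : ∀ r : ℝ, Ps d - C r * Pc d ≠ 0 := by
        intro r h
        have h0 : aeval Complex.I (Ps d - C r * Pc d) = 0 := by rw [h, map_zero]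
        rw [map_sub, map_mul, aeval_C, hPsI, hPcI] at h0
        have h3 : (Complex.I - algebraMap ℝ ℂ r) * 2 ^ (d-1) = 0 := by linear_combination h0
        rcases mul_eq_zero.mp h3 with h' | h'
        · have := congrArg Complex.im h'
          simp at this
        · exact h2pow h'
      have hDbad_ne : Dbad ≠ 0 := by
        rw [hDbad]
        apply mul_ne_zero hPc_ne
        apply Multiset.prod_ne_zero
        intro h0
        obtain ⟨r, _, hr⟩ := Multiset.mem_map.mp h0
        exact hfac_ne r hr
      apply Set.Infinite.mono _ ((finite_setOf_isRoot hDbad_ne).infinite_compl)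
      intro v hv
      simp only [Set.mem_compl_iff, Set.mem_setOf_eq, IsRoot.def] at hv
      have hPcv : (Pc d).eval v ≠ 0 := by
        intro h
        apply hv
        rw [hDbad, eval_mul, h, zero_mul]
      have hBw : B.eval ((Ps d).eval v / (Pc d).eval v) ≠ 0 := by
        intro h
        have hwroot : (Ps d).eval v / (Pc d).eval v ∈ B.roots := by
          rw [mem_roots hB]; exact h
        have hmem : Ps d - C ((Ps d).eval v / (Pc d).eval v) * Pc d ∈
            B.roots.map (fun r => Ps d - C r * Pc d) :=
          Multiset.mem_map.mpr ⟨_, hwroot, rfl⟩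
        have hdvd : (Ps d - C ((Ps d).eval v / (Pc d).eval v) * Pc d) ∣ Dbad :=
          Dvd.dvd.mul_left (Multiset.dvd_prod hmem) (Pc d)
        obtain ⟨E, hE⟩ := hdvd
        apply hv
        rw [hE, eval_mul]
        have : (Ps d - C ((Ps d).eval v / (Pc d).eval v) * Pc d).eval v = 0 := by
          simp only [eval_sub, eval_mul, eval_C]
          field_simp
          ring
        rw [this, zero_mul]
      have := hpoint v hPcv hBw
      simp only [Set.mem_setOf_eq, IsRoot.def, eval_sub, eval_mul, eval_pow, eval_add,
        eval_one, eval_X]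
      rw [this]
      ring
    rw [sub_eq_zero] at hsub
    exact hsub
  -- (i): all roots of the reduced denominator are ±I
  have hdenroots : ∀ z : ℂ, aeval z B₀ = 0 → z = Complex.I ∨ z = -Complex.I := by
    intro z hz
    by_contra hcon
    push_neg at hcon
    obtain ⟨hzi, hzni⟩ := hcon
    have hA₀z : aeval z A₀ ≠ 0 := by
      obtain ⟨u, w, huv⟩ := hcop
      intro h0
      have h1 := congrArg (aeval z) huv
      rw [map_add, map_mul, map_mul, h0, hz, mul_zero, mul_zero, add_zero, map_one] at h1
      exact zero_ne_one h1
    set qz : ℂ[X] := (Ps d).map (algebraMap ℝ ℂ) - Polynomial.C z * (Pc d).map (algebraMap ℝ ℂ)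
      with hqz
    have hqeval : ∀ x : ℂ, qz.eval x = aeval x (Ps d) - z * aeval x (Pc d) := by
      intro x
      simp [hqz, eval_map, aeval_def]
    have hqzdeg : 0 < qz.degree := by
      by_contra hdeg
      push_neg at hdeg
      have hconst := eq_C_of_degree_le_zero hdeg
      have e1 : qz.eval Complex.I = qz.eval (-Complex.I) := by rw [hconst]; simp
      rw [hqeval, hqeval, hPsI, hPcI, hPsI', hPcI'] at e1
      have h2 : (2:ℂ) * Complex.I * 2 ^ (d-1) = 0 := by linear_combination e1
      simp [Complex.I_ne_zero, h2pow] at h2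
    obtain ⟨v₀, hv₀⟩ := Complex.exists_root hqzdeg
    have hv₀eq : aeval v₀ (Ps d) = z * aeval v₀ (Pc d) := by
      have h1 : qz.eval v₀ = 0 := hv₀
      rw [hqeval] at h1
      linear_combination h1
    have hsum : aeval v₀ (Pc d) ^ 2 + aeval v₀ (Ps d) ^ 2 = (1 + v₀ ^ 2) ^ d := by
      have h1 := congrArg (aeval v₀) (sq_add_sq d)
      simpa using h1
    have hfactor : ∀ u : ℂ, 1 + u ^ 2 = 0 → u = Complex.I ∨ u = -Complex.I := by
      intro u hu
      have h2 : (u - Complex.I) * (u + Complex.I) = 0 := by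
        linear_combination hu - Complex.I_sq
      rcases mul_eq_zero.mp h2 with h' | h'
      · left; linear_combination h'
      · right; linear_combination h'
    have hPcv₀ : aeval v₀ (Pc d) ≠ 0 := by
      intro h0
      have hs0 : aeval v₀ (Ps d) = 0 := by rw [hv₀eq, h0, mul_zero]
      rw [h0, hs0] at hsum
      have h1 : (1 + v₀ ^ 2) ^ d = 0 := by rw [← hsum]; ring
      have h2 : 1 + v₀ ^ 2 = 0 := pow_eq_zero_iff (by omega) |>.mp h1
      rcases hfactor v₀ h2 with rfl | rfl
      · rw [hPcI] at h0; exact h2pow h0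
      · rw [hPcI'] at h0; exact h2pow h0
    have hv₀ne : 1 + v₀ ^ 2 ≠ 0 := by
      intro h1
      rcases hfactor v₀ h1 with hv | hv
      · apply hzi
        rw [hv, hPsI, hPcI] at hv₀eq
        exact (mul_right_cancel₀ h2pow hv₀eq).symm
      · apply hzni
        rw [hv, hPsI', hPcI'] at hv₀eq
        have : -(Complex.I) * 2 ^ (d-1) = z * 2 ^ (d-1) := by linear_combination hv₀eq
        exact (mul_right_cancel₀ h2pow this).symm
    have hkeyv := congrArg (aeval v₀) hkey
    rw [map_mul, map_mul, aeval_star' d M B₀ v₀ z hv₀eq hMB,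
      aeval_star' d M A₀ v₀ z hv₀eq hMA, hz] at hkeyv
    have hpow1 : aeval v₀ ((1 + X ^ 2 : ℝ[X]) ^ n) = (1 + v₀ ^ 2) ^ n := by
      simp
    rw [hpow1, mul_zero, mul_zero] at hkeyv
    exact (mul_ne_zero (pow_ne_zero n hv₀ne)
      (mul_ne_zero (pow_ne_zero M hPcv₀) hA₀z)) hkeyv.symm
  -- (ii): the reduced denominator is c (X²+1)^m
  obtain ⟨c, m, hc, hBform⟩ := decomp_aux B₀.natDegree B₀ le_rfl hB₀ hdenroots
  have hB₀deg : B₀.natDegree = 2 * m := by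
    rw [hBform, natDegree_C_mul hc, natDegree_pow, natDegree_X_sq_add_one]
    ring
  have hX1ne : (X ^ 2 + 1 : ℝ[X]) ≠ 0 := monic_X_sq_add_one.ne_zero
  -- (iii): degree bound on the numerator
  have hA₀deg : A₀.natDegree ≤ 2 * m := by
    by_cases hA₀0 : A₀ = 0
    · simp [hA₀0]
    by_contra hgt
    push_neg at hgt
    have hMeq : M = A₀.natDegree := by
      rw [hMdef]
      exact max_eq_left (by omega)
    have hcoeffB : B₀.coeff M = 0 := coeff_eq_zero_of_natDegree_lt (by omega)
    have hcoeffA : A₀.coeff M ≠ 0 := by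
      rw [hMeq]
      exact fun h => hA₀0 (leadingCoeff_eq_zero.mp h)
    have hX1one : (1 + X ^ 2 : ℝ[X]) ≠ 0 := by
      intro h
      have h2 := natDegree_one_add_X_sq
      rw [h] at h2
      simp at h2
    rcases eq_or_lt_of_le hd with hd1 | hd2
    · -- d = 1
      subst hd1
      rw [star'_one M B₀ hMB, star'_one M A₀ hMA] at hkey
      have hG0 : G ≠ 0 := by
        intro h0
        rw [h0, zero_mul] at hkey
        rcases mul_eq_zero.mp hkey.symm with h' | h'
        · exact pow_ne_zero n hX1one h'
        · exact hA₀0 h'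
      have hdeg := congrArg natDegree hkey
      rw [natDegree_mul hG0 hB₀, natDegree_mul (pow_ne_zero n hX1one) hA₀0,
        natDegree_pow, natDegree_one_add_X_sq] at hdeg
      omega
    · -- 2 ≤ d
      set t₁ := Real.pi / (2 * d) with ht₁
      have hdR : (2:ℝ) ≤ (d:ℝ) := by exact_mod_cast hd2
      have htpos : 0 < t₁ := by
        rw [ht₁]
        positivity
      have htlt : t₁ < Real.pi / 2 := by
        rw [ht₁]
        apply div_lt_div_of_pos_left Real.pi_pos (by norm_num)
        linarith
      have hcos : 0 < Real.cos t₁ :=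
        Real.cos_pos_of_mem_Ioo ⟨by linarith [Real.pi_pos], htlt⟩
      set v₁ := Real.tan t₁ with hv₁
      obtain ⟨hct, hst⟩ := trig_eval d t₁ hcos.ne'
      have hdt : (d:ℝ) * t₁ = Real.pi / 2 := by
        rw [ht₁]
        field_simp
      have hPcv₁ : (Pc d).eval v₁ = 0 := by
        rw [hdt, Real.cos_pi_div_two] at hct
        exact (mul_eq_zero.mp hct).resolve_right (pow_ne_zero d hcos.ne')
      have hPsv₁ : (Ps d).eval v₁ ≠ 0 := by
        intro h0
        have h1 := congrArg (eval v₁) (sq_add_sq d)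
        rw [eval_add, eval_pow, eval_pow, hPcv₁, h0] at h1
        simp only [eval_pow, eval_add, eval_one, eval_X] at h1
        have h2 : (0:ℝ) < (1 + v₁ ^ 2) ^ d := by positivity
        rw [← h1] at h2
        norm_num at h2
      have hkeyv := congrArg (eval v₁) hkey
      rw [eval_mul, eval_mul, eval_star'_root d M B₀ v₁ hPcv₁,
        eval_star'_root d M A₀ v₁ hPcv₁, hcoeffB, zero_mul, mul_zero] at hkeyv
      have hrhs : eval v₁ ((1 + X ^ 2 : ℝ[X]) ^ n) * (A₀.coeff M * (Ps d).eval v₁ ^ M) ≠ 0 := by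
        apply mul_ne_zero
        · simp only [eval_pow, eval_add, eval_one, eval_X]
          positivity
        · exact mul_ne_zero hcoeffA (pow_ne_zero M hPsv₁)
      exact hrhs hkeyv.symm
  -- assembly
  constructor
  · by_cases hA₀0 : A₀ = 0
    · refine ⟨1, le_rfl, 0, by simp, ?_⟩
      have hf0 : f = 0 := RatFunc.num_eq_zero_iff.mp hA₀0
      rw [hf0, map_zero, zero_div]
    · set k := max m 1 with hk
      have hk1 : 1 ≤ k := le_max_right _ _
      have hkm : m ≤ k := le_max_left _ _
      refine ⟨k, hk1, C c⁻¹ * (A₀ * (X ^ 2 + 1) ^ (k - m)), ?_, ?_⟩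
      · rw [natDegree_C_mul (inv_ne_zero hc),
          natDegree_mul hA₀0 (pow_ne_zero _ hX1ne), natDegree_pow, natDegree_X_sq_add_one]
        omega
      · have hpow_ne : ((X ^ 2 + 1 : ℝ[X]) ^ k) ≠ 0 := pow_ne_zero _ hX1ne
        have hpolyid : A₀ * (X ^ 2 + 1) ^ k = (C c⁻¹ * (A₀ * (X ^ 2 + 1) ^ (k - m))) * B₀ := by
          rw [hBform]
          have hsplit : (X ^ 2 + 1 : ℝ[X]) ^ k = (X ^ 2 + 1) ^ (k - m) * (X ^ 2 + 1) ^ m := by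
            rw [← pow_add]
            congr 1
            omega
          rw [hsplit]
          have hcc : (C c⁻¹ * C c : ℝ[X]) = 1 := by
            rw [← C_mul, inv_mul_cancel₀ hc, C_1]
          calc A₀ * ((X ^ 2 + 1 : ℝ[X]) ^ (k - m) * (X ^ 2 + 1) ^ m)
              = (C c⁻¹ * C c) * (A₀ * ((X ^ 2 + 1) ^ (k - m) * (X ^ 2 + 1) ^ m)) := by
                rw [hcc, one_mul]
            _ = _ := by ring
        rw [← RatFunc.num_div_denom f,
          div_eq_div_iff (RatFunc.algebraMap_ne_zero hB₀) (RatFunc.algebraMap_ne_zero hpow_ne),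
          ← map_mul, ← map_mul]
        exact congrArg _ (by rw [mul_comm A₀ ((X^2+1:ℝ[X])^k)] at hpolyid; rw [← hpolyid]; ring)
  · exact hdenroots
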